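/- Let V be a Φ-algebra and f : V → V a linear map with f³ = 0, and define δ_f : V → H ⊗ V by δ_f(v) = 1 ⊗ v + t ⊗ f(v) + t² ⊗ 2f²(v), where H = Φ[t]/(t³). Then δ_f is multiplicative, i.e., δ_f(v·w) = δ_f(v)·δ_f(w) in the algebra H ⊗ V for all v, w ∈ V, if and only if f is a derivation of V (f(v·w) = f(v)·w + v·f(w) for all v, w). In other words, V together with f is an algebra in Rep(α_3) if and only if f is a derivation. -/

import Mathlib

open scoped TensorProduct

/-- The truncated polynomial algebra `H = Φ[t]/(t³)`. -/
abbrev Hc (Φ : Type*) [Field Φ] : Type _ := AdjoinRoot (Polynomial.X ^ 3 : Polynomial Φ)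

/-- The image of `t` in `Φ[t]/(t³)`. -/
noncomputable def tH (Φ : Type*) [Field Φ] : Hc Φ :=
  AdjoinRoot.root (Polynomial.X ^ 3 : Polynomial Φ)

/-- The coaction `δ_f(v) = 1 ⊗ v + t ⊗ f(v) + t² ⊗ 2f²(v)` associated to a linear
map `f : V → V`. -/
noncomputable def deltaOf {Φ : Type*} [Field Φ] {V : Type*} [AddCommGroup V] [Module Φ V]
    (f : V →ₗ[Φ] V) : V →ₗ[Φ] Hc Φ ⊗[Φ] V :=
  TensorProduct.mk Φ (Hc Φ) V 1 + (TensorProduct.mk Φ (Hc Φ) V (tH Φ)).comp f +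
    (TensorProduct.mk Φ (Hc Φ) V (tH Φ ^ 2)).comp ((2 : Φ) • (f.comp f))

lemma deltaOf_apply' {Φ : Type*} [Field Φ] {V : Type*} [AddCommGroup V] [Module Φ V]
    (f : V →ₗ[Φ] V) (v : V) :
    deltaOf f v = 1 ⊗ₜ v + (tH Φ) ⊗ₜ f v + (tH Φ ^ 2) ⊗ₜ ((2:Φ) • f (f v)) := by
  simp [deltaOf]

lemma tH_pow3' (Φ : Type*) [Field Φ] : tH Φ ^ 3 = 0 := by
  have := AdjoinRoot.mk_self (f := (Polynomial.X ^ 3 : Polynomial Φ))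
  rw [map_pow, AdjoinRoot.mk_X] at this
  exact this

noncomputable def pbH' (Φ : Type*) [Field Φ] : PowerBasis Φ (Hc Φ) :=
  AdjoinRoot.powerBasis (pow_ne_zero 3 Polynomial.X_ne_zero)

lemma pbH_dim' (Φ : Type*) [Field Φ] : (pbH' Φ).dim = 3 := by
  simp [pbH', AdjoinRoot.powerBasis_dim]

/-- The coordinate functional extracting the coefficient of `t`. -/
noncomputable def eps1' (Φ : Type*) [Field Φ] : Hc Φ →ₗ[Φ] Φ :=
  (pbH' Φ).basis.coord ⟨1, by rw [pbH_dim']; norm_num⟩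

lemma eps1_pow' (Φ : Type*) [Field Φ] (k : ℕ) (hk : k < 3) :
    eps1' Φ (tH Φ ^ k) = if k = 1 then 1 else 0 := by
  have hgen : (pbH' Φ).gen = tH Φ := AdjoinRoot.powerBasis_gen _
  have hb : tH Φ ^ k = (pbH' Φ).basis ⟨k, by rw [pbH_dim']; omega⟩ := by
    rw [PowerBasis.basis_eq_pow, hgen]
  rw [hb, eps1', Module.Basis.coord_apply, Module.Basis.repr_self_apply]
  by_cases h : k = 1 <;> simp [h, Fin.ext_iff]

/-- For a `Φ`-algebra `V` and a linear map `f : V → V` with `f³ = 0`, the coaction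
`δ_f(v) = 1⊗v + t⊗f(v) + t²⊗2f²(v)` is multiplicative (for the componentwise algebra
structure on `H ⊗ V`) if and only if `f` is a derivation of `V`; i.e. `(V, f)` is an
algebra in `Rep(α₃)` iff `f` is a derivation. -/
theorem rep_alpha3_algebra_iff_derivation
    (Φ : Type*) [Field Φ] [CharP Φ 3]
    (V : Type*) [Ring V] [Algebra Φ V]
    (f : V →ₗ[Φ] V) (hf : f ∘ₗ f ∘ₗ f = 0) :
    (∀ v w : V, deltaOf f (v * w) = deltaOf f v * deltaOf f w) ↔
      (∀ v w : V, f (v * w) = f v * w + v * f w) := by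
  have t3 : tH Φ ^ 3 = 0 := tH_pow3' Φ
  have e1 : tH Φ * tH Φ = tH Φ ^ 2 := (sq _).symm
  have e2 : tH Φ * tH Φ ^ 2 = 0 := by rw [← pow_succ']; exact t3
  have e3 : tH Φ ^ 2 * tH Φ = 0 := by rw [← pow_succ]; exact t3
  have e4 : tH Φ ^ 2 * tH Φ ^ 2 = 0 := by
    rw [← pow_add, show (2 + 2) = 3 + 1 from rfl, pow_succ, t3, zero_mul]
  have h3 : (3 : Φ) = 0 := by exact_mod_cast CharP.cast_eq_zero Φ 3
  constructor
  · intro hmul v w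
    have h := hmul v w
    rw [deltaOf_apply', deltaOf_apply', deltaOf_apply'] at h
    simp only [mul_add, add_mul, Algebra.TensorProduct.tmul_mul_tmul, one_mul, mul_one,
      e1, e2, e3, e4, TensorProduct.zero_tmul, add_zero, zero_add] at h
    set L : Hc Φ ⊗[Φ] V →ₗ[Φ] V :=
      (TensorProduct.lid Φ V).toLinearMap ∘ₗ LinearMap.rTensor V (eps1' Φ) with hLdef
    have hL : ∀ (a : Hc Φ) (x : V), L (a ⊗ₜ x) = eps1' Φ a • x := by
      intro a x; simp [hLdef]
    have h2 := congrArg L h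
    have he0 : eps1' Φ (1 : Hc Φ) = 0 := by simpa using eps1_pow' Φ 0 (by norm_num)
    have he1 : eps1' Φ (tH Φ) = 1 := by simpa using eps1_pow' Φ 1 (by norm_num)
    have he2 : eps1' Φ (tH Φ ^ 2) = 0 := by simpa using eps1_pow' Φ 2 (by norm_num)
    simp only [map_add, hL, he0, he1, he2, zero_smul, one_smul, add_zero, zero_add] at h2
    exact h2
  · intro hder v w
    have h1 : f (v * w) = f v * w + v * f w := hder v w
    have h2 : f (f v * w + v * f w) = f (f v) * w + f v * f w + (f v * f w + v * f (f w)) := by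
      rw [map_add, hder, hder]
    rw [deltaOf_apply', deltaOf_apply', deltaOf_apply', h1, h2]
    simp only [mul_add, add_mul, Algebra.TensorProduct.tmul_mul_tmul, one_mul, mul_one,
      e1, e2, e3, e4, TensorProduct.zero_tmul, add_zero, zero_add,
      smul_add, smul_mul_assoc, mul_smul_comm, TensorProduct.tmul_add, TensorProduct.tmul_smul]
    match_scalars
    any_goals ring1
    all_goals linear_combination h3
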